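/- Under the derivation action Lₙ = −Σᵢ xᵢ^{n+1} ∂/∂xᵢ on symmetric functions, for n ≥ 1 and m ≥ 0 the action on elementary symmetric functions is Lₙ(eₘ) = (−1)^{n+1}(n+m)·e_{n+m} + Σ_{j=0}^{n−1} (−1)^{j+1} p_{n−j}·e_{m+j}. -/

import Mathlib

open MvPolynomial Finset

variable {N : ℕ}

private lemma pderiv_prod_X_of_not_mem {i : Fin N} {S : Finset (Fin N)} (h : i ∉ S) :
    pderiv i (∏ j ∈ S, (X j : MvPolynomial (Fin N) ℚ)) = 0 := by
  classical
  induction S using Finset.induction with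
  | empty => simp
  | @insert a s ha ih =>
    have hai : a ≠ i := by rintro rfl; exact h (Finset.mem_insert_self a s)
    rw [Finset.prod_insert ha, pderiv_mul, ih (fun hm => h (Finset.mem_insert_of_mem hm)),
      pderiv_X_of_ne hai]
    ring

private lemma pderiv_prod_X_of_mem {i : Fin N} {S : Finset (Fin N)} (h : i ∈ S) :
    pderiv i (∏ j ∈ S, (X j : MvPolynomial (Fin N) ℚ)) = ∏ j ∈ S.erase i, X j := by
  classical
  rw [← Finset.mul_prod_erase S _ h, pderiv_mul, pderiv_X_self,
    pderiv_prod_X_of_not_mem (Finset.notMem_erase i S)]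
  ring

/-- esymm in the variables other than `i` -/
private noncomputable def fE (i : Fin N) (m : ℕ) : MvPolynomial (Fin N) ℚ :=
  ∑ S ∈ powersetCard m (univ.erase i), ∏ j ∈ S, X j

private lemma not_mem_of_mem_pc {i : Fin N} {m : ℕ} {S : Finset (Fin N)}
    (hS : S ∈ powersetCard m (univ.erase i)) : i ∉ S :=
  fun h => Finset.notMem_erase i univ ((Finset.mem_powersetCard.mp hS).1 h)

private lemma pc_disj (i : Fin N) (m : ℕ) :
    Disjoint (powersetCard (m + 1) (univ.erase i))
      ((powersetCard m (univ.erase i)).image (insert i)) := by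
  rw [Finset.disjoint_left]
  rintro S hS hS'
  obtain ⟨T, hT, rfl⟩ := Finset.mem_image.mp hS'
  exact not_mem_of_mem_pc hS (Finset.mem_insert_self i T)

private lemma pc_inj (i : Fin N) (m : ℕ) :
    ∀ a ∈ powersetCard m (univ.erase i), ∀ b ∈ powersetCard m (univ.erase i),
      insert i a = insert i b → a = b := by
  intro a ha b hb hab
  have h : (insert i a).erase i = (insert i b).erase i := by rw [hab]
  rwa [Finset.erase_insert (not_mem_of_mem_pc ha),
    Finset.erase_insert (not_mem_of_mem_pc hb)] at h

private lemma univ_eq_insert_erase (i : Fin N) :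
    (univ : Finset (Fin N)) = insert i (univ.erase i) := by
  rw [Finset.insert_erase (Finset.mem_univ i)]

private lemma esymm_split (i : Fin N) (m : ℕ) :
    esymm (Fin N) ℚ (m + 1) = fE i (m + 1) + X i * fE i m := by
  classical
  rw [esymm, univ_eq_insert_erase i,
    Finset.powersetCard_succ_insert (Finset.notMem_erase i univ),
    Finset.sum_union (pc_disj i m), Finset.sum_image (pc_inj i m)]
  rw [fE, fE, Finset.mul_sum]
  congr 1
  exact Finset.sum_congr rfl fun S hS => Finset.prod_insert (not_mem_of_mem_pc hS)

private lemma pderiv_esymm_succ (i : Fin N) (m : ℕ) :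
    pderiv i (esymm (Fin N) ℚ (m + 1)) = fE i m := by
  classical
  rw [esymm, univ_eq_insert_erase i,
    Finset.powersetCard_succ_insert (Finset.notMem_erase i univ),
    Finset.sum_union (pc_disj i m), map_add, map_sum, map_sum, Finset.sum_image (pc_inj i m),
    Finset.sum_eq_zero (fun S hS => pderiv_prod_X_of_not_mem (not_mem_of_mem_pc hS)), zero_add]
  rw [fE]
  refine Finset.sum_congr rfl fun S hS => ?_
  rw [Finset.prod_insert (not_mem_of_mem_pc hS), pderiv_mul, pderiv_X_self,
    pderiv_prod_X_of_not_mem (not_mem_of_mem_pc hS)]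
  ring

/-- key variable-wise identity: eₘ = ∂ᵢ e_{m+1} + xᵢ ∂ᵢ eₘ -/
private lemma esymm_key (i : Fin N) (m : ℕ) :
    esymm (Fin N) ℚ m =
      pderiv i (esymm (Fin N) ℚ (m + 1)) + X i * pderiv i (esymm (Fin N) ℚ m) := by
  cases m with
  | zero =>
    rw [pderiv_esymm_succ i 0, esymm_zero, Derivation.map_one_eq_zero, mul_zero, add_zero, fE]
    simp
  | succ k =>
    rw [pderiv_esymm_succ, pderiv_esymm_succ, esymm_split i k]

/-- Euler identity for esymm -/
private lemma euler_esymm (m : ℕ) :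
    (∑ i : Fin N, X i * pderiv i (esymm (Fin N) ℚ m)) = (m : ℚ) • esymm (Fin N) ℚ m := by
  classical
  rw [esymm]
  have h : ∀ i : Fin N,
      X i * pderiv i (∑ t ∈ powersetCard m univ, ∏ j ∈ t, (X j : MvPolynomial (Fin N) ℚ))
      = ∑ t ∈ powersetCard m univ, X i * pderiv i (∏ j ∈ t, X j) := by
    intro i; rw [map_sum, Finset.mul_sum]
  simp_rw [h]
  rw [Finset.sum_comm, Finset.smul_sum]
  refine Finset.sum_congr rfl fun S hS => ?_
  have hcard : S.card = m := (Finset.mem_powersetCard.mp hS).2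
  calc ∑ i : Fin N, X i * pderiv i (∏ j ∈ S, (X j : MvPolynomial (Fin N) ℚ))
      = ∑ i ∈ S, X i * pderiv i (∏ j ∈ S, (X j : MvPolynomial (Fin N) ℚ)) := by
        refine (Finset.sum_subset (Finset.subset_univ S) fun i _ hi => ?_).symm
        rw [pderiv_prod_X_of_not_mem hi, mul_zero]
    _ = ∑ i ∈ S, ∏ j ∈ S, (X j : MvPolynomial (Fin N) ℚ) := by
        refine Finset.sum_congr rfl fun i hi => ?_
        rw [pderiv_prod_X_of_mem hi, Finset.mul_prod_erase S _ hi]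
    _ = (m : ℚ) • ∏ j ∈ S, (X j : MvPolynomial (Fin N) ℚ) := by
        rw [Finset.sum_const, hcard, ← Nat.cast_smul_eq_nsmul ℚ]

/-- the recurrence -/
private lemma rec_step (k m : ℕ) :
    (∑ i : Fin N, X i ^ (k + 1) * pderiv i (esymm (Fin N) ℚ m))
      = psum (Fin N) ℚ k * esymm (Fin N) ℚ m
        - ∑ i : Fin N, X i ^ k * pderiv i (esymm (Fin N) ℚ (m + 1)) := by
  rw [psum, Finset.sum_mul, ← Finset.sum_sub_distrib]
  refine Finset.sum_congr rfl fun i _ => ?_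
  conv_rhs => rw [esymm_key i m]
  ring

private lemma claim (n : ℕ) : ∀ m : ℕ,
    (∑ i : Fin N, X i ^ (n + 1) * pderiv i (esymm (Fin N) ℚ m))
      = ((-1 : ℚ) ^ n * ((n + m : ℕ) : ℚ)) • esymm (Fin N) ℚ (n + m)
        + ∑ j ∈ range n, ((-1 : ℚ) ^ j) •
            (psum (Fin N) ℚ (n - j) * esymm (Fin N) ℚ (m + j)) := by
  induction n with
  | zero =>
    intro m
    simp only [zero_add, pow_one, range_zero, Finset.sum_empty, add_zero, pow_zero, one_mul]
    rw [euler_esymm]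
  | succ n ih =>
    intro m
    rw [rec_step (n + 1) m, ih (m + 1), Finset.sum_range_succ']
    simp only [Nat.add_sub_add_right, Nat.sub_zero, pow_zero, one_smul, add_zero]
    have h1 : n + 1 + m = n + (m + 1) := by omega
    rw [h1]
    have hsum : ∀ j ∈ range n, ((-1 : ℚ) ^ (j + 1)) •
        (psum (Fin N) ℚ (n - j) * esymm (Fin N) ℚ (m + (j + 1)))
        = -(((-1 : ℚ) ^ j) • (psum (Fin N) ℚ (n - j) * esymm (Fin N) ℚ (m + 1 + j))) := by
      intro j _
      have h2 : m + (j + 1) = m + 1 + j := by omega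
      rw [h2, pow_succ, mul_smul, ← smul_neg]
      congr 1
      rw [neg_one_smul]
    rw [Finset.sum_congr rfl hsum, Finset.sum_neg_distrib]
    have hc : ((-1 : ℚ) ^ (n + 1) * ((n + (m + 1) : ℕ) : ℚ)) • esymm (Fin N) ℚ (n + (m + 1))
        = -(((-1 : ℚ) ^ n * ((n + (m + 1) : ℕ) : ℚ)) • esymm (Fin N) ℚ (n + (m + 1))) := by
      rw [pow_succ, ← neg_smul]
      congr 1
      ring
    rw [hc]
    abel

theorem wittOp_esymm (N : ℕ) (n : ℕ) (hn : 1 ≤ n) (m : ℕ) :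
    (- ∑ i : Fin N, X i ^ (n + 1) * pderiv i (esymm (Fin N) ℚ m))
      = ((-1 : ℚ) ^ (n + 1) * ((n + m : ℕ) : ℚ)) • esymm (Fin N) ℚ (n + m)
        + ∑ j ∈ range n, ((-1 : ℚ) ^ (j + 1)) •
            (psum (Fin N) ℚ (n - j) * esymm (Fin N) ℚ (m + j)) := by
  rw [claim n m, neg_add, ← Finset.sum_neg_distrib]
  congr 1
  · rw [← neg_smul, pow_succ]
    congr 1
    ring
  · refine Finset.sum_congr rfl fun j _ => ?_
    rw [pow_succ, mul_smul, ← smul_neg]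
    congr 1
    rw [neg_one_smul]
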